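/- For 0 < c < 1 and τ > 0, define f(α) = α − ((1−c)/τ)·log((1 − c·exp(−ατ/c))/(1−c)) for α with c·exp(−ατ/c) < 1. If α ≤ 0 and f(α) ≤ 1, then α ≥ −√(2(1−c)c/τ). -/

import Mathlib

open Real

lemma quad_le_exp_aux (t : ℝ) (ht : 0 ≤ t) : 1 + t + t ^ 2 / 2 ≤ Real.exp t := by
  have hmono : MonotoneOn (fun x : ℝ => Real.exp x - (1 + x + x ^ 2 / 2)) (Set.Icc 0 t) := by
    apply monotoneOn_of_deriv_nonneg (convex_Icc 0 t)
    · fun_prop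
    · fun_prop
    · intro x hx
      rw [interior_Icc] at hx
      have hd : HasDerivAt (fun x : ℝ => Real.exp x - (1 + x + x ^ 2 / 2))
          (Real.exp x - (0 + 1 + 2 * x ^ 1 / 2)) x := by
        exact (Real.hasDerivAt_exp x).sub
          (((hasDerivAt_const x 1).add (hasDerivAt_id x)).add ((hasDerivAt_pow 2 x).div_const 2))
      rw [hd.deriv]
      have := Real.add_one_le_exp x
      simp only [pow_one]
      linarith
  have h0 : (fun x : ℝ => Real.exp x - (1 + x + x ^ 2 / 2)) 0 ≤
      (fun x : ℝ => Real.exp x - (1 + x + x ^ 2 / 2)) t :=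
    hmono (Set.left_mem_Icc.2 ht) (Set.right_mem_Icc.2 ht) ht
  simp only [Real.exp_zero] at h0
  norm_num at h0
  linarith

lemma log_one_sub_le_aux (u : ℝ) (hu0 : 0 ≤ u) (hu1 : u < 1) :
    Real.log (1 - u) ≤ -u - u ^ 2 / 2 := by
  have hanti : AntitoneOn (fun x : ℝ => Real.log (1 - x) + x + x ^ 2 / 2) (Set.Icc 0 u) := by
    apply antitoneOn_of_deriv_nonpos (convex_Icc 0 u)
    · apply ContinuousOn.add
      apply ContinuousOn.add
      · apply ContinuousOn.log
        · fun_prop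
        · intro x hx
          have hx1 : x < 1 := lt_of_le_of_lt hx.2 hu1
          intro h
          have := sub_eq_zero.mp h
          linarith
      · fun_prop
      · fun_prop
    · rw [interior_Icc]
      apply DifferentiableOn.add
      apply DifferentiableOn.add
      · apply DifferentiableOn.log
        · fun_prop
        · intro x hx
          have hx1 : x < 1 := lt_trans hx.2 hu1
          intro h
          have := sub_eq_zero.mp h
          linarith
      · fun_prop
      · fun_prop
    · intro x hx
      rw [interior_Icc] at hx
      have hx1 : x < 1 := lt_trans hx.2 hu1
      have h1x : (0:ℝ) < 1 - x := by linarith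
      have hd : HasDerivAt (fun x : ℝ => Real.log (1 - x) + x + x ^ 2 / 2)
          ((-1) / (1 - x) + 1 + 2 * x ^ 1 / 2) x :=
        ((((hasDerivAt_id x).const_sub 1).log (ne_of_gt h1x)).add
          (hasDerivAt_id x)).add ((hasDerivAt_pow 2 x).div_const 2)
      rw [hd.deriv]
      have hx0 : 0 ≤ x := le_of_lt hx.1
      have key : (-1) / (1 - x) + 1 + 2 * x ^ 1 / 2 = (-(x ^ 2)) / (1 - x) := by
        field_simp
        ring
      rw [key]
      apply div_nonpos_of_nonpos_of_nonneg _ (le_of_lt h1x)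
      nlinarith [sq_nonneg x]
  have h0 : (fun x : ℝ => Real.log (1 - x) + x + x ^ 2 / 2) u ≤
      (fun x : ℝ => Real.log (1 - x) + x + x ^ 2 / 2) 0 :=
    hanti (Set.left_mem_Icc.2 hu0) (Set.right_mem_Icc.2 hu0) hu0
  norm_num at h0
  linarith

/-- Key one-sided estimate: if `α ≤ 0` and
`f(α) = α - ((1-c)/τ)·log((1 - c·exp(-ατ/c))/(1-c)) ≤ 1`, then `α ≥ -√(2(1-c)c/τ)`. -/
theorem negative_alpha_bound (c τ α : ℝ)
    (hc0 : 0 < c) (hc1 : c < 1) (hτ : 0 < τ)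
    (hdom : c * Real.exp (-α * τ / c) < 1)
    (hα : α ≤ 0)
    (hf : α - ((1 - c) / τ) * Real.log ((1 - c * Real.exp (-α * τ / c)) / (1 - c)) ≤ 1) :
    α ≥ -Real.sqrt (2 * (1 - c) * c / τ) := by
  set t : ℝ := -α * τ / c with ht_def
  have ht0 : 0 ≤ t := by
    apply div_nonneg _ (le_of_lt hc0)
    nlinarith
  have hexp1 : 1 ≤ Real.exp t := Real.one_le_exp ht0
  have h1c : (0:ℝ) < 1 - c := by linarith
  set u : ℝ := c * (Real.exp t - 1) / (1 - c) with hu_def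
  have hu0 : 0 ≤ u := by
    apply div_nonneg _ (le_of_lt h1c)
    nlinarith
  have hu1 : u < 1 := by
    rw [hu_def, div_lt_one h1c]
    nlinarith
  have key : (1 - c * Real.exp (-α * τ / c)) / (1 - c) = 1 - u := by
    rw [hu_def]
    field_simp
    rw [show -(α * τ / c) = t by rw [ht_def]; ring]
    ring
  rw [key] at hf
  have hlog : Real.log (1 - u) ≤ -u - u ^ 2 / 2 := log_one_sub_le_aux u hu0 hu1
  have hq : 1 + t + t ^ 2 / 2 ≤ Real.exp t := quad_le_exp_aux t ht0
  have hu_lb : c * (t + t ^ 2 / 2) / (1 - c) ≤ u := by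
    rw [hu_def]
    gcongr
    linarith
  have hu_lb2 : c * t / (1 - c) ≤ u := by
    rw [hu_def]
    gcongr
    nlinarith
  have hcoef : (0:ℝ) < (1 - c) / τ := by positivity
  have hmul' : α + (1 - c) / τ * (u + u ^ 2 / 2) ≤ 1 := by
    have hm := mul_le_mul_of_nonneg_left hlog hcoef.le
    have hid : (1 - c) / τ * (-u - u ^ 2 / 2) = -((1 - c) / τ * (u + u ^ 2 / 2)) := by ring
    linarith
  have h1 : α * τ + (1 - c) * (u + u ^ 2 / 2) ≤ τ := by
    have h2 := mul_le_mul_of_nonneg_right hmul' hτ.le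
    have h3 : (α + (1 - c) / τ * (u + u ^ 2 / 2)) * τ
        = α * τ + (1 - c) * (u + u ^ 2 / 2) := by
      field_simp
    rw [h3, one_mul] at h2
    exact h2
  have h2 : c * (t + t ^ 2 / 2) ≤ u * (1 - c) := (div_le_iff₀ h1c).mp hu_lb
  have h3 : c * t ≤ u * (1 - c) := (div_le_iff₀ h1c).mp hu_lb2
  have hct : c * t = -α * τ := by
    rw [ht_def]
    field_simp
  have hct0 : 0 ≤ c * t := mul_nonneg hc0.le ht0
  have hsqf : c * t * (c * t) ≤ u * (1 - c) * (u * (1 - c)) :=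
    mul_self_le_mul_self hct0 h3
  have hct2 : (c * t) ^ 2 = (α * τ) ^ 2 := by rw [hct]; ring
  have hct3 : c * (1 - c) * (c * t) = c * (1 - c) * (-α * τ) := by rw [hct]
  have hA := mul_le_mul_of_nonneg_right h1 (mul_nonneg hc0.le h1c.le)
  have hB := mul_le_mul_of_nonneg_right h2 (mul_nonneg hc0.le h1c.le)
  have hC := mul_le_mul_of_nonneg_left hsqf hc0.le
  have hfin2 : α ^ 2 * τ * τ ≤ 2 * (1 - c) * c * τ := by nlinarith [hA, hB, hC, hct3, hct2]
  have hfin : α ^ 2 * τ ≤ 2 * (1 - c) * c := le_of_mul_le_mul_right hfin2 hτ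
  have hsq : α ^ 2 ≤ 2 * (1 - c) * c / τ := by
    rw [le_div_iff₀ hτ]
    linarith
  have habs : -α ≤ Real.sqrt (2 * (1 - c) * c / τ) := by
    calc -α = |α| := (abs_of_nonpos hα).symm
      _ = Real.sqrt (α ^ 2) := (Real.sqrt_sq_eq_abs α).symm
      _ ≤ _ := Real.sqrt_le_sqrt hsq
  linarith
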